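/- Let G be a free group with basis g₁, …, g_n, let H be a free group, let φ, ψ : G → H be homomorphisms, and let u, v ∈ H be distinct. If the homomorphism φ ∗ ψ ∗ u ∗ v : G ∗ G ∗ ⟨x⟩ ∗ ⟨y⟩ → H (sending the generators of the first free factor via φ, those of the second via ψ, and x ↦ u, y ↦ v) has remnant, then u and v are in different doubly-twisted conjugacy classes: there is no g ∈ G with v = φ(g) u ψ(g)⁻¹. -/

import Mathlib

/-! Basic definitions: cancellation in products of reduced words, remnant
of a homomorphism of free groups, and assorted constructions. -/

open FreeGroup

/-- `bpow w e` is `w` if `e = true` (exponent `+1`) and `w⁻¹` if `e = false`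
(exponent `-1`). -/
def bpow {β : Type*} (w : FreeGroup β) (e : Bool) : FreeGroup β := if e then w else w⁻¹

/-- The number of letters cancelled between `a` and `b` when the product `a * b`
is brought to reduced form: `(|a| + |b| - |a * b|) / 2`. -/
def cancel {β : Type*} [DecidableEq β] (a b : FreeGroup β) : ℕ :=
  (FreeGroup.norm a + FreeGroup.norm b - FreeGroup.norm (a * b)) / 2

/-- The maximal number of letters of the reduced word `η(gᵢ)` cancelled on its left
in a product `η(gⱼ)^ε * η(gᵢ)`, over all `j` and `ε = ±1` except `j = i, ε = -1`. -/
def maxLeftCancel {α β : Type*} [Fintype α] [DecidableEq α] [DecidableEq β]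
    (η : FreeGroup α →* FreeGroup β) (i : α) : ℕ :=
  (Finset.univ.filter fun je : α × Bool => je ≠ (i, false)).sup
    fun je => cancel (bpow (η (FreeGroup.of je.1)) je.2) (η (FreeGroup.of i))

/-- The maximal number of letters of the reduced word `η(gᵢ)` cancelled on its right
in a product `η(gᵢ) * η(gⱼ)^ε`, over all `j` and `ε = ±1` except `j = i, ε = -1`. -/
def maxRightCancel {α β : Type*} [Fintype α] [DecidableEq α] [DecidableEq β]
    (η : FreeGroup α →* FreeGroup β) (i : α) : ℕ :=
  (Finset.univ.filter fun je : α × Bool => je ≠ (i, false)).sup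
    fun je => cancel (η (FreeGroup.of i)) (bpow (η (FreeGroup.of je.1)) je.2)

/-- `η` has remnant: for each generator `gᵢ`, the maximal left cancellation plus the
maximal right cancellation is strictly less than the length of `η(gᵢ)`, so a nonempty
middle subword (the remnant `Rem_η(gᵢ)`) always survives. -/
def HasRemnant {α β : Type*} [Fintype α] [DecidableEq α] [DecidableEq β]
    (η : FreeGroup α →* FreeGroup β) : Prop :=
  ∀ i : α, maxLeftCancel η i + maxRightCancel η i < FreeGroup.norm (η (FreeGroup.of i))

/-- The length `|Rem_η(gᵢ)|` of the remnant word of `gᵢ`: the part of `η(gᵢ)` surviving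
all maximal cancellations. -/
def remnantLength {α β : Type*} [Fintype α] [DecidableEq α] [DecidableEq β]
    (η : FreeGroup α →* FreeGroup β) (i : α) : ℕ :=
  FreeGroup.norm (η (FreeGroup.of i)) - maxLeftCancel η i - maxRightCancel η i

/-- The remnant `Rem_η(gᵢ)` occupies positions `[maxLeftCancel η i, |η(gᵢ)| - maxRightCancel η i)`
of the reduced word `η(gᵢ)`.  It does not fully cancel in the reduced form of the product
`η(gᵢ) * w` iff the number of letters cancelled from the right end of `η(gᵢ)`, namely
`cancel (η(gᵢ)) w`, leaves some remnant letter alive. -/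
def remnantSurvivesRightMul {α β : Type*} [Fintype α] [DecidableEq α] [DecidableEq β]
    (η : FreeGroup α →* FreeGroup β) (i : α) (w : FreeGroup β) : Prop :=
  cancel (η (FreeGroup.of i)) w + maxLeftCancel η i < FreeGroup.norm (η (FreeGroup.of i))

/-- The remnant `Rem_η(gᵢ)` does not fully cancel in the reduced form of the
product `w * η(gᵢ)`. -/
def remnantSurvivesLeftMul {α β : Type*} [Fintype α] [DecidableEq α] [DecidableEq β]
    (η : FreeGroup α →* FreeGroup β) (i : α) (w : FreeGroup β) : Prop :=
  cancel w (η (FreeGroup.of i)) + maxRightCancel η i < FreeGroup.norm (η (FreeGroup.of i))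

/-- The homomorphism `φ ∗ ψ : G ∗ G → H` on the free product `G ∗ G`, realized as the
free group on `α ⊕ α`, sending the generators of the first factor via `φ` and those of
the second factor via `ψ`. -/
def prodHom {α β : Type*} (φ ψ : FreeGroup α →* FreeGroup β) :
    FreeGroup (α ⊕ α) →* FreeGroup β :=
  FreeGroup.lift (Sum.elim (fun i => φ (FreeGroup.of i)) (fun i => ψ (FreeGroup.of i)))

/-- `φ^v : g ↦ v⁻¹ φ(g) v`. -/
def conjHom {G H : Type*} [Group G] [Group H] (φ : G →* H) (v : H) : G →* H :=
  ((MulAut.conj v⁻¹).toMonoidHom).comp φ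

/-- The equalizer subgroup `Eq(φ, ψ) = {g : φ g = ψ g}`. -/
def eqSubgroup {G H : Type*} [Group G] [Group H] (φ ψ : G →* H) : Subgroup G where
  carrier := {g | φ g = ψ g}
  one_mem' := by simp
  mul_mem' := by
    intro a b ha hb
    simp only [Set.mem_setOf_eq] at *
    rw [_root_.map_mul, _root_.map_mul, ha, hb]
  inv_mem' := by
    intro a ha
    simp only [Set.mem_setOf_eq] at *
    rw [_root_.map_inv, _root_.map_inv, ha]

/-- The homomorphism `φ ∗ ψ ∗ u ∗ v : G ∗ G ∗ ⟨x⟩ ∗ ⟨y⟩ → H`, where the domain is the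
free group on `α ⊕ α ⊕ Unit ⊕ Unit`, sending the generators of the first factor via
`φ`, those of the second via `ψ`, and `x ↦ u`, `y ↦ v`. -/
def quadHom {α β : Type*} (φ ψ : FreeGroup α →* FreeGroup β) (u v : FreeGroup β) :
    FreeGroup (α ⊕ α ⊕ Unit ⊕ Unit) →* FreeGroup β :=
  FreeGroup.lift (Sum.elim (fun i => φ (FreeGroup.of i))
    (Sum.elim (fun i => ψ (FreeGroup.of i))
      (Sum.elim (fun _ => u) (fun _ => v))))


open FreeGroup List

namespace RemnantProof

/-- The non-cancellation relation between adjacent letters of a reduced word. -/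
def Rel {α : Type*} : (α × Bool) → (α × Bool) → Prop :=
  fun a b => ¬(a.1 = b.1 ∧ a.2 = !b.2)

section Words
variable {α : Type*} [DecidableEq α] {L : List (α × Bool)}

lemma reduce_eq_self_of_chain' (h : List.Chain' Rel L) : reduce L = L := by
  induction L with
  | nil => rfl
  | cons a T ih =>
    have hT : reduce T = T := ih h.tail
    rw [reduce.cons, hT]
    cases T with
    | nil => rfl
    | cons b T' =>
      have hr : Rel a b := (List.isChain_cons_cons.1 h).1
      show (if a.1 = b.1 ∧ a.2 = !b.2 then T' else a :: b :: T') = a :: b :: T'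
      rw [if_neg hr]

lemma chain'_of_reduce_eq_self (h : reduce L = L) : List.Chain' Rel L := by
  induction L with
  | nil => exact List.isChain_nil
  | cons a T ih =>
    rw [reduce.cons] at h
    cases hT : reduce T with
    | nil =>
      rw [hT] at h
      have : T = [] := by injection h with h1 h2; exact h2.symm
      subst this
      exact List.isChain_singleton a
    | cons b T' =>
      rw [hT] at h
      dsimp only at h
      by_cases hc : a.1 = b.1 ∧ a.2 = !b.2
      · rw [if_pos hc] at h
        exfalso
        have h1 : (reduce T).length ≤ T.length := Red.length_le reduce.red
        have h2 := congrArg List.length h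
        rw [hT] at h1
        simp at h1 h2
        omega
      · rw [if_neg hc] at h
        have hT2 : T = b :: T' := by injection h with _ h; exact h.symm
        have : reduce T = T := by rw [hT, hT2]
        rw [hT2]
        exact List.isChain_cons_cons.2 ⟨hc, hT2 ▸ ih this⟩

lemma invRev_cons (x : α × Bool) (M : List (α × Bool)) :
    invRev (x :: M) = invRev M ++ [(x.1, !x.2)] := by
  simp [invRev]

lemma invRev_drop (M : List (α × Bool)) (k : ℕ) :
    (invRev M).drop k = invRev (M.take (M.length - k)) := by
  rcases le_or_gt k M.length with hk | hk
  · unfold invRev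
    rw [List.map_take, List.reverse_take, List.length_map]
    congr 1
    omega
  · rw [List.drop_eq_nil_of_le (by rw [invRev_length]; omega)]
    rw [Nat.sub_eq_zero_of_le hk.le]
    simp [invRev]

lemma reduce_append_spec : ∀ (A B : List (α × Bool)), reduce A = A → reduce B = B →
    ∃ d, d ≤ A.length ∧ d ≤ B.length ∧
      reduce (A ++ B) = A.take (A.length - d) ++ B.drop d ∧
      A.drop (A.length - d) = invRev (B.take d) := by
  intro A
  induction A using List.reverseRecOn with
  | nil =>
    intro B _ hB
    exact ⟨0, by simp [hB, invRev]⟩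
  | append_singleton A' a ih =>
    intro B hA hB
    match B, hB with
    | [], hB => exact ⟨0, by simp, by simp,
        by rw [List.append_nil, Nat.sub_zero, List.take_length]; simpa using hA, by simp [invRev]⟩
    | b :: B', hB =>
      have hchA : List.Chain' Rel (A' ++ [a]) := chain'_of_reduce_eq_self hA
      have hchB : List.Chain' Rel (b :: B') := chain'_of_reduce_eq_self hB
      by_cases hab : a.1 = b.1 ∧ a.2 = !b.2
      · -- the last letter of `A` cancels with the first letter of `B`
        have ha : a = (b.1, !b.2) := Prod.ext hab.1 hab.2
        have hstep : Red.Step ((A' ++ [a]) ++ b :: B') (A' ++ B') := by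
          have heq : (A' ++ [a]) ++ b :: B' = A' ++ (b.1, !b.2) :: (b.1, !(!b.2)) :: B' := by
            rw [Bool.not_not, ha]
            simp
          rw [heq]
          exact Red.Step.not
        have hred : reduce ((A' ++ [a]) ++ b :: B') = reduce (A' ++ B') :=
          reduce.Step.eq hstep
        have hA' : reduce A' = A' :=
          reduce_eq_self_of_chain' (hchA.prefix (List.prefix_append _ _))
        have hB' : reduce B' = B' := reduce_eq_self_of_chain' hchB.tail
        obtain ⟨d, hd1, hd2, hd3, hd4⟩ := ih B' hA' hB'
        refine ⟨d + 1, by simp only [List.length_append, List.length_cons,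
          List.length_nil]; omega, by simp only [List.length_cons]; omega, ?_, ?_⟩
        · rw [hred, hd3]
          have h1 : (A' ++ [a]).length - (d + 1) = A'.length - d := by simp
          rw [h1, List.take_append_of_le_length (by omega), List.drop_succ_cons]
        · have h1 : (A' ++ [a]).length - (d + 1) = A'.length - d := by simp
          rw [h1, List.drop_append_of_le_length (by omega), hd4, List.take_succ_cons,
            invRev_cons, ha]
      · -- no cancellation at all: the concatenation is already reduced
        refine ⟨0, Nat.zero_le _, Nat.zero_le _, ?_, by simp [invRev]⟩
        rw [Nat.sub_zero, List.drop_zero, List.take_length]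
        apply reduce_eq_self_of_chain'
        refine List.isChain_append.2 ⟨hchA, hchB, ?_⟩
        intro x hx y hy
        simp at hx hy
        subst hx; subst hy
        exact hab

end Words
section Group
variable {β : Type*} [DecidableEq β]

lemma norm_eq_length (a : FreeGroup β) : FreeGroup.norm a = a.toWord.length := rfl

lemma cancel_spec (a b : FreeGroup β) :
    cancel a b ≤ FreeGroup.norm a ∧ cancel a b ≤ FreeGroup.norm b ∧
      (a * b).toWord = a.toWord.take (FreeGroup.norm a - cancel a b)
        ++ b.toWord.drop (cancel a b) ∧
      a.toWord.drop (FreeGroup.norm a - cancel a b) = invRev (b.toWord.take (cancel a b)) := by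
  obtain ⟨d, h1, h2, h3, h4⟩ :=
    reduce_append_spec a.toWord b.toWord (reduce_toWord a) (reduce_toWord b)
  have habw : (a * b).toWord = reduce (a.toWord ++ b.toWord) := by
    conv_lhs => rw [← mk_toWord (x := a), ← mk_toWord (x := b)]
    rw [mul_mk, toWord_mk]
  rw [← norm_eq_length] at h1 h2 h3 h4
  have hd : cancel a b = d := by
    have hlen : FreeGroup.norm (a * b)
        = (FreeGroup.norm a - d) + (FreeGroup.norm b - d) := by
      rw [norm_eq_length, habw, h3, List.length_append, List.length_take, List.length_drop,
        ← norm_eq_length, ← norm_eq_length, min_eq_left (by omega)]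
    unfold cancel
    omega
  rw [hd]
  exact ⟨h1, h2, by rw [habw, h3], h4⟩

lemma le_cancel {a b : FreeGroup β} {t : ℕ} (ht : t ≤ FreeGroup.norm a)
    (ht' : t ≤ FreeGroup.norm b)
    (hs : a.toWord.drop (FreeGroup.norm a - t) = invRev (b.toWord.take t)) :
    t ≤ cancel a b := by
  have hmid : FreeGroup.mk (a.toWord.drop (FreeGroup.norm a - t))
      * FreeGroup.mk (b.toWord.take t) = 1 := by
    rw [hs, ← FreeGroup.inv_mk, inv_mul_cancel]
  have hab : a * b = FreeGroup.mk (a.toWord.take (FreeGroup.norm a - t))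
      * FreeGroup.mk (b.toWord.drop t) := by
    conv_lhs =>
      rw [← mk_toWord (x := a), ← mk_toWord (x := b),
        ← List.take_append_drop (FreeGroup.norm a - t) a.toWord,
        ← List.take_append_drop t b.toWord, ← mul_mk, ← mul_mk]
    rw [mul_assoc, ← mul_assoc (FreeGroup.mk (a.toWord.drop (FreeGroup.norm a - t))),
      hmid, one_mul]
  have hle : FreeGroup.norm (a * b)
      ≤ (FreeGroup.norm a - t) + (FreeGroup.norm b - t) := by
    rw [hab]
    refine (FreeGroup.norm_mul_le _ _).trans (add_le_add
      (FreeGroup.norm_mk_le.trans ?_) (FreeGroup.norm_mk_le.trans ?_)) <;>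
      simp [List.length_take, List.length_drop, ← norm_eq_length]
  unfold cancel
  omega

lemma cancel_inv_inv (a b : FreeGroup β) : cancel a b = cancel b⁻¹ a⁻¹ := by
  unfold cancel
  rw [FreeGroup.norm_inv_eq, FreeGroup.norm_inv_eq, ← mul_inv_rev, FreeGroup.norm_inv_eq,
    Nat.add_comm]

lemma bpow_inv (w : FreeGroup β) (e : Bool) : (bpow w e)⁻¹ = bpow w (!e) := by
  cases e <;> simp [bpow]

end Group
end RemnantProof

namespace RemnantProof
section Hom
open FreeGroup List
variable {α β : Type*} [Fintype α] [DecidableEq α] [DecidableEq β]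
  (η : FreeGroup α →* FreeGroup β)

/-- The image of a single letter. -/
def lX (le : α × Bool) : FreeGroup β := bpow (η (FreeGroup.of le.1)) le.2

/-- Maximal admissible cancellation on the left of the image of a letter. -/
def mCL (le : α × Bool) : ℕ :=
  if le.2 then maxLeftCancel η le.1 else maxRightCancel η le.1

/-- Maximal admissible cancellation on the right of the image of a letter. -/
def mCR (le : α × Bool) : ℕ :=
  if le.2 then maxRightCancel η le.1 else maxLeftCancel η le.1

lemma norm_lX (le : α × Bool) :
    FreeGroup.norm (lX η le) = FreeGroup.norm (η (FreeGroup.of le.1)) := by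
  rcases le with ⟨s, e⟩
  cases e <;> simp [lX, bpow, FreeGroup.norm_inv_eq]

lemma mC_lt (h : HasRemnant η) (le : α × Bool) :
    mCL η le + mCR η le < FreeGroup.norm (η (FreeGroup.of le.1)) := by
  rcases le with ⟨s, e⟩
  have := h s
  cases e <;> simp only [mCL, mCR, if_true, if_false, Bool.false_eq_true] <;> omega

lemma eta_mk_single (le : α × Bool) : η (FreeGroup.mk [le]) = lX η le := by
  rcases le with ⟨s, e⟩
  cases e
  · have h1 : FreeGroup.mk [(s, false)] = (FreeGroup.of s)⁻¹ := by
      rw [FreeGroup.of, FreeGroup.inv_mk]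
      simp [FreeGroup.invRev]
    rw [h1]
    simp [lX, bpow]
  · show η (FreeGroup.of s) = _
    simp [lX, bpow]

lemma cancel_lX_le_mCL {le le' : α × Bool} (hR : Rel le le') :
    cancel (lX η le) (lX η le') ≤ mCL η le' := by
  rcases le' with ⟨s', e'⟩
  unfold Rel at hR
  cases e'
  · -- `lX (s', false) = η(of s')⁻¹`; use `maxRightCancel`
    have hx : cancel (lX η le) (lX η (s', false))
        = cancel (η (FreeGroup.of s')) (bpow (η (FreeGroup.of le.1)) (!le.2)) := by
      rw [cancel_inv_inv, ← bpow_inv]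
      show cancel ((bpow (η (FreeGroup.of s')) false)⁻¹) _ = _
      rw [bpow_inv]
      rfl
    rw [hx]
    show _ ≤ mCL η (s', false)
    simp only [mCL, if_false, Bool.false_eq_true]
    refine Finset.le_sup (b := (le.1, !le.2)) (f := fun je : α × Bool =>
      cancel (η (FreeGroup.of s')) (bpow (η (FreeGroup.of je.1)) je.2)) ?_
    simp only [Finset.mem_filter, Finset.mem_univ, true_and, ne_eq, Prod.mk.injEq, not_and]
    intro h1 h2
    exact hR ⟨h1, by rw [← h2]; simp⟩
  · show cancel (bpow (η (FreeGroup.of le.1)) le.2) (η (FreeGroup.of s')) ≤ mCL η (s', true)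
    simp only [mCL, if_true]
    refine Finset.le_sup (b := le) (f := fun je : α × Bool =>
      cancel (bpow (η (FreeGroup.of je.1)) je.2) (η (FreeGroup.of s'))) ?_
    simp only [Finset.mem_filter, Finset.mem_univ, true_and, ne_eq]
    intro hcon
    exact hR ⟨by rw [hcon], by rw [hcon]; rfl⟩

lemma cancel_lX_le_mCR {le le' : α × Bool} (hR : Rel le le') :
    cancel (lX η le) (lX η le') ≤ mCR η le := by
  rcases le with ⟨s, e⟩
  unfold Rel at hR
  cases e
  · -- `lX (s, false) = η(of s)⁻¹`; use `maxLeftCancel`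
    have hx : cancel (lX η (s, false)) (lX η le')
        = cancel (bpow (η (FreeGroup.of le'.1)) (!le'.2)) (η (FreeGroup.of s)) := by
      rw [cancel_inv_inv, ← bpow_inv]
      show cancel _ ((bpow (η (FreeGroup.of s)) false)⁻¹) = _
      rw [bpow_inv]
      rfl
    rw [hx]
    show _ ≤ mCR η (s, false)
    simp only [mCR, if_false, Bool.false_eq_true]
    refine Finset.le_sup (b := (le'.1, !le'.2)) (f := fun je : α × Bool =>
      cancel (bpow (η (FreeGroup.of je.1)) je.2) (η (FreeGroup.of s))) ?_
    simp only [Finset.mem_filter, Finset.mem_univ, true_and, ne_eq, Prod.mk.injEq, not_and]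
    intro h1 h2
    exact hR ⟨h1.symm, by rw [h2]⟩
  · show cancel (η (FreeGroup.of s)) (bpow (η (FreeGroup.of le'.1)) le'.2) ≤ mCR η (s, true)
    simp only [mCR, if_true]
    refine Finset.le_sup (b := le') (f := fun je : α × Bool =>
      cancel (η (FreeGroup.of s)) (bpow (η (FreeGroup.of je.1)) je.2)) ?_
    simp only [Finset.mem_filter, Finset.mem_univ, true_and, ne_eq]
    intro hcon
    exact hR ⟨by rw [hcon], by rw [hcon]; rfl⟩

end Hom
end RemnantProof

namespace RemnantProof
section Key
open FreeGroup List
variable {α β : Type*} [Fintype α] [DecidableEq α] [DecidableEq β]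
  (η : FreeGroup α →* FreeGroup β)

lemma key (h : HasRemnant η) :
    ∀ (L : List (α × Bool)) (le : α × Bool), List.Chain' Rel (L ++ [le]) →
      ∃ c ≤ mCL η le, ∃ T, (η (FreeGroup.mk (L ++ [le]))).toWord
        = T ++ (lX η le).toWord.drop c := by
  intro L
  induction L using List.reverseRecOn with
  | nil =>
    intro le _
    refine ⟨0, Nat.zero_le _, [], ?_⟩
    rw [List.nil_append, List.drop_zero, List.nil_append, eta_mk_single]
  | append_singleton L' le₀ ih =>
    intro le₁ hch
    -- notation
    set a := η (FreeGroup.mk (L' ++ [le₀])) with ha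
    set b := lX η le₁ with hb
    set N₀ := FreeGroup.norm (η (FreeGroup.of le₀.1)) with hN₀
    -- structural facts
    have hch₀ : List.Chain' Rel (L' ++ [le₀]) := hch.prefix (List.prefix_append _ _)
    have hR : Rel le₀ le₁ := by
      have hsuf : [le₀, le₁] <:+ (L' ++ [le₀]) ++ [le₁] := by
        rw [List.append_assoc]
        exact List.suffix_append L' ([le₀] ++ [le₁])
      exact List.isChain_pair.1 (hch.suffix hsuf)
    obtain ⟨c₀, hc₀, T₀, hT₀⟩ := ih le₀ hch₀
    have hmul : η (FreeGroup.mk ((L' ++ [le₀]) ++ [le₁])) = a * b := by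
      rw [← FreeGroup.mul_mk, MonoidHom.map_mul η, eta_mk_single]
    obtain ⟨hd1, hd2, hd3, hd4⟩ := cancel_spec a b
    set d := cancel a b with hdd
    -- lengths
    have hrem := mC_lt η h le₀
    have hnorma : FreeGroup.norm a = T₀.length + ((lX η le₀).toWord.length - c₀) := by
      rw [norm_eq_length, hT₀, List.length_append, List.length_drop]
    have hWlen : (lX η le₀).toWord.length = N₀ := by
      rw [← norm_eq_length, norm_lX]
    have hc₀N : c₀ < N₀ := by omega
    set t := min d (N₀ - c₀) with htdef
    have htS : t ≤ N₀ - c₀ := min_le_right _ _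
    have htd : t ≤ d := min_le_left _ _
    -- the cancelled part is a common suffix of `lX η le₀` and `a`
    have hstep1 : a.toWord.drop (FreeGroup.norm a - t)
        = (lX η le₀).toWord.drop (N₀ - t) := by
      rw [hT₀]
      have : FreeGroup.norm a - t = T₀.length + ((N₀ - c₀) - t) := by omega
      rw [this, List.drop_length_add_append, List.drop_drop]
      congr 1
      omega
    have hstep2 : a.toWord.drop (FreeGroup.norm a - t) = invRev (b.toWord.take t) := by
      have h1 : FreeGroup.norm a - t = (FreeGroup.norm a - d) + (d - t) := by omega
      rw [h1, ← List.drop_drop, hd4, invRev_drop]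
      have h2 : (b.toWord.take d).length = d := by
        rw [List.length_take, ← norm_eq_length]
        omega
      rw [h2]
      have h3 : d - (d - t) = t := by omega
      rw [h3, List.take_take, min_eq_left htd]
    have hcXX : t ≤ cancel (lX η le₀) (lX η le₁) := by
      refine le_cancel ?_ ?_ (by rw [norm_lX, ← hN₀, ← hstep1, hstep2])
      · rw [norm_lX, ← hN₀]; omega
      · exact htd.trans hd2
    -- remnant forces the cancellation to stay inside the exposed suffix
    have htR : t ≤ mCR η le₀ := hcXX.trans (cancel_lX_le_mCR η hR)
    have hdS : d < N₀ - c₀ := by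
      rcases lt_or_ge d (N₀ - c₀) with h' | h'
      · exact h'
      · exfalso
        have : t = N₀ - c₀ := by omega
        omega
    have htdeq : t = d := by omega
    have hdL : d ≤ mCL η le₁ := by
      rw [← htdeq]
      exact hcXX.trans (cancel_lX_le_mCL η hR)
    exact ⟨d, hdL, a.toWord.take (FreeGroup.norm a - d), by rw [hmul, hd3]⟩

lemma eq_one_of_remnant (h : HasRemnant η) {w : FreeGroup α} (hw : η w = 1) : w = 1 := by
  by_contra hne
  obtain hnil | ⟨L, le, hL⟩ := w.toWord.eq_nil_or_concat
  · exact hne (FreeGroup.toWord_eq_nil_iff.mp hnil)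
  · rw [List.concat_eq_append] at hL
    have hch : List.Chain' Rel (L ++ [le]) := by
      apply chain'_of_reduce_eq_self
      rw [← hL]
      exact FreeGroup.reduce_toWord w
    obtain ⟨c, hc, T, hT⟩ := key η h L le hch
    rw [← hL, FreeGroup.mk_toWord, hw] at hT
    have h0 : (T ++ (lX η le).toWord.drop c).length = 0 := by
      rw [← hT, FreeGroup.toWord_one, List.length_nil]
    have hrem := mC_lt η h le
    rw [List.length_append, List.length_drop, ← norm_eq_length, norm_lX] at h0
    omega

end Key
end RemnantProof


/-- If `u ≠ v` and `φ ∗ ψ ∗ u ∗ v : G ∗ G ∗ ⟨x⟩ ∗ ⟨y⟩ → H` has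
remnant, then `u` and `v` are in different doubly-twisted conjugacy classes. -/
theorem classes_distinct_of_quad_hasRemnant {n : ℕ} {β : Type*} [DecidableEq β]
    (φ ψ : FreeGroup (Fin n) →* FreeGroup β) (u v : FreeGroup β) (huv : u ≠ v)
    (h : HasRemnant (quadHom φ ψ u v)) :
    ¬ ∃ g : FreeGroup (Fin n), v = φ g * u * (ψ g)⁻¹ := by
  rintro ⟨g, hg⟩
  -- the test element `g x g⁻¹ y⁻¹` of `G ∗ G ∗ ⟨x⟩ ∗ ⟨y⟩`
  set g₁ : FreeGroup (Fin n ⊕ Fin n ⊕ Unit ⊕ Unit) :=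
    FreeGroup.map Sum.inl g with hg₁
  set g₂ : FreeGroup (Fin n ⊕ Fin n ⊕ Unit ⊕ Unit) :=
    FreeGroup.map (fun i => Sum.inr (Sum.inl i)) g with hg₂
  set x : FreeGroup (Fin n ⊕ Fin n ⊕ Unit ⊕ Unit) :=
    FreeGroup.of (Sum.inr (Sum.inr (Sum.inl ()))) with hx0
  set y : FreeGroup (Fin n ⊕ Fin n ⊕ Unit ⊕ Unit) :=
    FreeGroup.of (Sum.inr (Sum.inr (Sum.inr ()))) with hy0
  have h1 : quadHom φ ψ u v g₁ = φ g := by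
    have hc : (quadHom φ ψ u v).comp (FreeGroup.map Sum.inl) = φ :=
      FreeGroup.ext_hom _ _ (fun a => by simp [quadHom])
    rw [hg₁]
    exact DFunLike.congr_fun hc g
  have h2 : quadHom φ ψ u v g₂ = ψ g := by
    have hc : (quadHom φ ψ u v).comp (FreeGroup.map fun i => Sum.inr (Sum.inl i)) = ψ :=
      FreeGroup.ext_hom _ _ (fun a => by simp [quadHom])
    rw [hg₂]
    exact DFunLike.congr_fun hc g
  have hx : quadHom φ ψ u v x = u := by rw [hx0]; simp [quadHom]
  have hy : quadHom φ ψ u v y = v := by rw [hy0]; simp [quadHom]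
  have hW : quadHom φ ψ u v (g₁ * x * g₂⁻¹ * y⁻¹) = 1 := by
    rw [_root_.map_mul, _root_.map_mul, _root_.map_mul, _root_.map_inv, _root_.map_inv,
      h1, h2, hx, hy, ← hg, mul_inv_cancel]
  have hW1 : g₁ * x * g₂⁻¹ * y⁻¹ = 1 := RemnantProof.eq_one_of_remnant _ h hW
  -- project to the free group generated by `y` alone
  set π : FreeGroup (Fin n ⊕ Fin n ⊕ Unit ⊕ Unit) →* FreeGroup Unit :=
    FreeGroup.lift (Sum.elim (fun _ => (1 : FreeGroup Unit))
      (Sum.elim (fun _ => 1) (Sum.elim (fun _ => 1) (fun _ => FreeGroup.of ())))) with hπ0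
  have hπ1 : π g₁ = 1 := by
    have hc : π.comp (FreeGroup.map Sum.inl) = 1 :=
      FreeGroup.ext_hom _ _ (fun a => by simp [hπ0])
    rw [hg₁]
    exact DFunLike.congr_fun hc g
  have hπ2 : π g₂ = 1 := by
    have hc : π.comp (FreeGroup.map fun i => Sum.inr (Sum.inl i)) = 1 :=
      FreeGroup.ext_hom _ _ (fun a => by simp [hπ0])
    rw [hg₂]
    exact DFunLike.congr_fun hc g
  have hπx : π x = 1 := by rw [hx0, hπ0]; simp
  have hπy : π y = FreeGroup.of () := by rw [hy0, hπ0]; simp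
  have hfin : (1 : FreeGroup Unit) = (FreeGroup.of ())⁻¹ := by
    rw [← _root_.map_one π, ← hW1, _root_.map_mul, _root_.map_mul, _root_.map_mul,
      _root_.map_inv, _root_.map_inv, hπ1, hπ2, hπx, hπy]
    simp
  have hone : FreeGroup.of () = (1 : FreeGroup Unit) := inv_eq_one.mp hfin.symm
  have hnorm := FreeGroup.norm_of (α := Unit) ()
  rw [hone, FreeGroup.norm_one] at hnorm
  exact absurd hnorm (by omega)
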